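/- Let k ≥ 1 and j ≥ 1 be integers and let s = 2ᵏ − 1. Define γ₀ = 1 and γₙ = ∏_{i=0}^{n−1} ((2ⁱ·j + 1)/(2ⁱ·j + 2ᵏ))² for n ≥ 1. Then there exists a probability measure μ supported in [0,1] such that γₙ = ∫ tⁿ dμ(t) for all n ∈ ℕ. (These γₙ are the moments of the weighted shift with weights wₙ = (2ⁿ + 1/j)/(2ⁿ + (s+1)/j), which is the shift appearing on the orbit of founder j in the direct sum decomposition of the adjoint B*_{z^s z̄^s} of the H-Toeplitz operator with symbol z^s z̄^s on the Bergman space; hence each such shift, and therefore B*_{z^s z̄^s}, is subnormal when s = 2ᵏ − 1.) -/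

import Mathlib

open MeasureTheory Finset

private lemma prod_double {M : Type*} [CommMonoid M] (f : ℕ → M) (k : ℕ) :
    ∏ m ∈ range (2*k), f (m/2) = ∏ r ∈ range k, (f r)^2 := by
  induction k with
  | zero => simp
  | succ k ih =>
    have h : 2*(k+1) = (2*k) + 1 + 1 := by ring
    rw [h, prod_range_succ, prod_range_succ, ih, prod_range_succ]
    have h1 : (2*k)/2 = k := by omega
    have h2 : (2*k+1)/2 = k := by omega
    rw [h1, h2, sq, mul_assoc]

private lemma subclaim (k n : ℕ) (jR : ℝ) (hjR : 0 < jR) :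
    (∏ r ∈ range k, (jR/2^(r+1) + (1/2:ℝ)^(n+1))) * (2^n * jR + 2^k) =
    (∏ r ∈ range k, (jR/2^(r+1) + (1/2:ℝ)^n)) * (2^n * jR + 1) := by
  set h : ℕ → ℝ := fun r => jR * 2^n / 2^r + 1 with hh
  have e1 : ∀ r, jR/2^(r+1) + (1/2:ℝ)^(n+1) = h r / 2^(n+1) := by
    intro r; simp only [hh]
    have h1 : (2:ℝ)^(r+1) ≠ 0 := by positivity
    have h2 : (2:ℝ)^(n+1) ≠ 0 := by positivity
    have h3 : (2:ℝ)^r ≠ 0 := by positivity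
    field_simp
    have h4 : (1/2:ℝ)^n * 2^n = 1 := by rw [← mul_pow]; norm_num
    linear_combination ((2:ℝ)^(r*2)*2) * h4
  have e2 : ∀ r, jR/2^(r+1) + (1/2:ℝ)^n = h (r+1) / 2^n := by
    intro r; simp only [hh]
    have h1 : (2:ℝ)^(r+1) ≠ 0 := by positivity
    have h2 : (2:ℝ)^n ≠ 0 := by positivity
    field_simp
    have h4 : (1/2:ℝ)^n * 2^n = 1 := by rw [← mul_pow]; norm_num
    linear_combination ((2:ℝ)^(r+1)) * h4
  have hPQ : (∏ r ∈ range k, h r) * h k = (∏ r ∈ range k, h (r+1)) * h 0 := by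
    rw [← prod_range_succ, prod_range_succ']
  rw [prod_congr rfl fun r _ => e1 r, prod_congr rfl fun r _ => e2 r,
    prod_div_distrib, prod_div_distrib, prod_const, prod_const]
  have h0 : (2:ℝ)^n * jR + 1 = h 0 := by simp [hh]; ring
  have hk2 : (2:ℝ)^n * jR + 2^k = 2^k * h k := by
    simp only [hh]
    have h3 : (2:ℝ)^k ≠ 0 := by positivity
    field_simp
  have hp : ((2:ℝ)^(n+1))^k = 2^k * (2^n)^k := by
    rw [pow_succ, mul_comm ((2:ℝ)^n) 2, mul_pow]
  have hA : ((2:ℝ)^(n+1))^k ≠ 0 := by positivity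
  have hB : ((2:ℝ)^n)^k ≠ 0 := by positivity
  simp only [card_range]
  rw [div_mul_eq_mul_div, div_mul_eq_mul_div, div_eq_div_iff hA hB, hk2, h0, hp]
  linear_combination (2^k * ((2:ℝ)^n)^k) * hPQ

private lemma telescope (k : ℕ) (jR : ℝ) (hjR : 0 < jR) (n : ℕ) :
    ∏ r ∈ range k, ((jR / 2^(r+1) + (1/2:ℝ)^n) / (jR / 2^(r+1) + 1)) =
      ∏ i ∈ range n, ((2^i * jR + 1) / (2^i * jR + 2^k)) := by
  have hden : ∀ r : ℕ, jR / 2^(r+1) + 1 ≠ 0 := fun r => by positivity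
  induction n with
  | zero =>
    rw [prod_range_zero]
    exact prod_eq_one fun r _ => by rw [pow_zero, div_self (hden r)]
  | succ n ih =>
    rw [prod_range_succ, ← ih]
    have hD : (∏ r ∈ range k, (jR / 2^(r+1) + 1)) ≠ 0 := prod_ne_zero_iff.2 fun r _ => hden r
    have hd2 : (2:ℝ)^n * jR + 2^k ≠ 0 := by positivity
    rw [prod_div_distrib, prod_div_distrib, div_mul_div_comm,
      div_eq_div_iff hD (by exact mul_ne_zero hD hd2)]
    linear_combination (∏ r ∈ range k, (jR / 2^(r+1) + 1)) * subclaim k n jR hjR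

private lemma integrable_dirac_poly (n : ℕ) (a : ℝ) :
    Integrable (fun t : ℝ => t ^ n) (Measure.dirac a) := by
  refine ⟨(measurable_id.pow_const n).aestronglyMeasurable, ?_⟩
  rw [HasFiniteIntegral, lintegral_dirac]
  exact ENNReal.coe_lt_top

theorem subnormal_shift_s_eq_two_pow_sub_one (k j : ℕ) (hk : 1 ≤ k) (hj : 1 ≤ j) :
    ∃ μ : Measure ℝ, IsProbabilityMeasure μ ∧ μ (Set.Icc (0 : ℝ) 1)ᶜ = 0 ∧
      ∀ n : ℕ, ∫ t, t ^ n ∂μ =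
        ∏ i ∈ Finset.range n,
          (((2 : ℝ) ^ i * j + 1) / ((2 : ℝ) ^ i * j + 2 ^ k)) ^ 2 := by
  have hjR : (0:ℝ) < (j:ℝ) := by exact_mod_cast Nat.lt_of_lt_of_le Nat.zero_lt_one hj
  set jR : ℝ := (j : ℝ) with hjRdef
  set c : ℕ → ℝ := fun m => jR / 2^(m/2+1) with hc
  have hcpos : ∀ m, 0 < c m := fun m => by positivity
  have hc1 : ∀ m, c m + 1 ≠ 0 := fun m => by have := hcpos m; positivity
  set p : ℕ → ℝ := fun m => c m / (c m + 1) with hp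
  set q : ℕ → ℝ := fun m => 1 / (c m + 1) with hq
  have hqp : ∀ m, q m + p m = 1 := fun m => by
    simp only [hp, hq]; rw [← add_div, add_comm, div_self (hc1 m)]
  have hp0 : ∀ m, 0 ≤ p m := fun m => by have := hcpos m; positivity
  have hq0 : ∀ m, 0 ≤ q m := fun m => by have := hcpos m; positivity
  set w : Finset ℕ → ℝ := fun S => (∏ m ∈ S, q m) * ∏ m ∈ (range (2*k)) \ S, p m with hw
  have hw0 : ∀ S, 0 ≤ w S := fun S =>
    mul_nonneg (prod_nonneg fun m _ => hq0 m) (prod_nonneg fun m _ => hp0 m)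
  refine ⟨∑ S ∈ (range (2*k)).powerset,
      ENNReal.ofReal (w S) • Measure.dirac ((1/2:ℝ)^S.card), ?_, ?_, ?_⟩
  · constructor
    rw [Measure.finset_sum_apply]
    have : ∀ S ∈ (range (2*k)).powerset,
        (ENNReal.ofReal (w S) • Measure.dirac ((1/2:ℝ)^S.card)) Set.univ
          = ENNReal.ofReal (w S) := by
      intro S _
      simp [Measure.smul_apply]
    rw [Finset.sum_congr rfl this, ← ENNReal.ofReal_sum_of_nonneg (fun S _ => hw0 S)]
    have : ∑ S ∈ (range (2*k)).powerset, w S = 1 := by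
      rw [hw, ← prod_add, Finset.prod_congr rfl fun m _ => hqp m, prod_const_one]
    rw [this, ENNReal.ofReal_one]
  · rw [Measure.finset_sum_apply]
    refine Finset.sum_eq_zero fun S _ => ?_
    have hmem : (1/2:ℝ)^S.card ∈ Set.Icc (0:ℝ) 1 := by
      constructor
      · positivity
      · exact pow_le_one₀ (by norm_num) (by norm_num)
    have hd : Measure.dirac ((1/2:ℝ)^S.card) (Set.Icc (0:ℝ) 1)ᶜ = 0 := by
      rw [Measure.dirac_apply' _ measurableSet_Icc.compl,
        Set.indicator_of_notMem (by simpa using hmem)]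
    rw [Measure.smul_apply, hd, smul_zero]
  · intro n
    rw [integral_finset_sum_measure (fun S _ =>
      (integrable_dirac_poly n _).smul_measure ENNReal.ofReal_ne_top)]
    have step : ∀ S ∈ (range (2*k)).powerset,
        (∫ t, t ^ n ∂(ENNReal.ofReal (w S) • Measure.dirac ((1/2:ℝ)^S.card)))
          = (∏ m ∈ S, q m * (1/2:ℝ)^n) * ∏ m ∈ (range (2*k)) \ S, p m := by
      intro S _
      rw [integral_smul_measure, integral_dirac, ENNReal.toReal_ofReal (hw0 S)]
      rw [smul_eq_mul, hw, prod_mul_distrib, prod_const]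
      rw [← pow_mul, ← pow_mul, Nat.mul_comm]
      ring
    rw [Finset.sum_congr rfl step, ← prod_add]
    have factor : ∀ m : ℕ, q m * (1/2:ℝ)^n + p m
        = (c m + (1/2:ℝ)^n) / (c m + 1) := by
      intro m
      simp only [hp, hq]
      field_simp
      ring
    rw [Finset.prod_congr rfl fun m _ => factor m]
    have hcself : ∀ m : ℕ, c m = jR / 2^(m/2+1) := fun m => rfl
    calc ∏ m ∈ range (2*k), (c m + (1/2:ℝ)^n) / (c m + 1)
        = ∏ m ∈ range (2*k),
            (fun r => (jR / 2^(r+1) + (1/2:ℝ)^n) / (jR / 2^(r+1) + 1)) (m/2) := by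
          exact Finset.prod_congr rfl fun m _ => by rw [hcself m]
      _ = ∏ r ∈ range k,
            ((jR / 2^(r+1) + (1/2:ℝ)^n) / (jR / 2^(r+1) + 1))^2 :=
          prod_double (fun r => (jR / 2^(r+1) + (1/2:ℝ)^n) / (jR / 2^(r+1) + 1)) k
      _ = (∏ r ∈ range k, (jR / 2^(r+1) + (1/2:ℝ)^n) / (jR / 2^(r+1) + 1))^2 := by
          rw [prod_pow]
      _ = (∏ i ∈ range n, ((2^i * jR + 1) / (2^i * jR + 2^k)))^2 := by
          rw [telescope k jR hjR n]
      _ = ∏ i ∈ range n, (((2:ℝ)^i * jR + 1) / ((2:ℝ)^i * jR + 2^k))^2 := by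
          rw [prod_pow]
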